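/- arXiv:2011.05848 — 3 statements merged into one kernel-verified Lean document; each statement's English description precedes it below -/
import Mathlib

section
/- Let q be real with 0 < q < 1, and fix a, b, c, d, e ∈ ℂ with d, e ∉ {q^{−j} : j ∈ ℕ}. Let f : ℂ × ℂ → ℂ be analytic in a neighborhood U of (0,0) ∈ ℂ², and suppose that for all (x,y) ∈ U, x·[f(x,y) − f(x,qy) − (d+e)q^{−1}(f(x,qy) − f(x,q²y)) + de·q^{−2}(f(x,q²y) − f(x,q³y))] = y·[(f(x,y) − f(qx,y)) − (a+b+c)(f(x,qy) − f(qx,qy)) + (ab+ac+bc)(f(x,q²y) − f(qx,q²y)) − abc(f(x,q³y) − f(qx,q³y))]. Let g : ℂ → ℂ be g(x) = f(x,0). Then there is a neighborhood V ⊆ U of (0,0) such that for all (x,y) ∈ V with x ≠ 0, the series ∑_{n=0}^∞ ((a,b,c;q)_n/((q;q)_n (d,e;q)_n)) · y^n · (D_q^n g)(x) converges to f(x,y). -/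
open FormalMultilinearSeries

lemma myOfScalarsCoeff (A : ℕ → ℂ) (n : ℕ) :
    (FormalMultilinearSeries.ofScalars ℂ A).coeff n = A n := by
  rw [FormalMultilinearSeries.coeff, show (1 : Fin n → ℂ) = fun _ => (1 : ℂ) from rfl,
    ofScalars_apply_eq]
  simp

lemma myHasFPS {R : NNReal} (hR : 0 < R) {A : ℕ → ℂ} {S : ℂ → ℂ}
    (hA : ∀ y : ℂ, ‖y‖ < R → HasSum (fun n => A n * y ^ n) (S y)) :
    HasFPowerSeriesOnBall S (FormalMultilinearSeries.ofScalars ℂ A) 0 R where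
  r_le := by
    refine ENNReal.le_of_forall_nnreal_lt (fun r hr => ?_)
    have hrR : (r : ℝ) < R := by exact_mod_cast hr
    have hs : Summable (fun n => A n * ((r : ℝ) : ℂ) ^ n) :=
      (hA ((r : ℝ) : ℂ) (by simpa using hrR)).summable
    have ht : Filter.Tendsto (fun n => A n * ((r : ℝ) : ℂ) ^ n) Filter.atTop (nhds 0) :=
      hs.tendsto_atTop_zero
    have ht2 : Filter.Tendsto (fun n => ‖FormalMultilinearSeries.ofScalars ℂ A n‖ * (r : ℝ) ^ n)
        Filter.atTop (nhds 0) := by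
      have := ht.norm
      simp only [norm_zero] at this
      convert this using 2 with n
      simp [norm_mul, ofScalars_norm, abs_of_nonneg r.coe_nonneg, myOfScalarsCoeff]
    exact (FormalMultilinearSeries.ofScalars ℂ A).le_radius_of_tendsto ht2
  r_pos := by exact_mod_cast hR
  hasSum := by
    intro y hy
    rw [EMetric.mem_ball, edist_zero_right] at hy
    have hy' : ‖y‖ < R := by exact_mod_cast hy
    have h2 := hA y hy'
    rw [zero_add]
    convert h2 using 2 with n
    · rfl
    rw [ofScalars_apply_eq, smul_eq_mul]

lemma myUnique {R : NNReal} (hR : 0 < R) {A B : ℕ → ℂ} {S : ℂ → ℂ}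
    (hA : ∀ y : ℂ, ‖y‖ < R → HasSum (fun n => A n * y ^ n) (S y))
    (hB : ∀ y : ℂ, ‖y‖ < R → HasSum (fun n => B n * y ^ n) (S y)) :
    ∀ n, A n = B n := by
  have h := ((myHasFPS hR hA).hasFPowerSeriesAt).eq_formalMultilinearSeries
    ((myHasFPS hR hB).hasFPowerSeriesAt)
  intro n
  rw [← myOfScalarsCoeff A n, h, myOfScalarsCoeff]

noncomputable def qPoch (q a : ℂ) (n : ℕ) : ℂ := ∏ j ∈ Finset.range n, (1 - a * q ^ j)

/-- The q-derivative operator: (D_q g)(x) = (g(x) − g(qx))/x. -/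
noncomputable def qDeriv (q : ℂ) (g : ℂ → ℂ) : ℂ → ℂ := fun x => (g x - g (q * x)) / x

/-- a solution of the first generalized q-difference equation is
represented by the operator T(a,b,c,d,e,yD_x) applied to f(x,0). -/
theorem stmt2 (q : ℝ) (hq0 : 0 < q) (hq1 : q < 1)
    (a b c d e : ℂ)
    (hd : ∀ j : ℕ, d ≠ (((q : ℂ)) ^ j)⁻¹) (he : ∀ j : ℕ, e ≠ (((q : ℂ)) ^ j)⁻¹)
    (f : ℂ × ℂ → ℂ) (U : Set (ℂ × ℂ)) (hU : U ∈ nhds ((0 : ℂ), (0 : ℂ)))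
    (hf : AnalyticOnNhd ℂ f U)
    (heq : ∀ x y : ℂ, (x, y) ∈ U →
      x * ((f (x, y) - f (x, (q : ℂ) * y))
        - (d + e) * ((q : ℂ))⁻¹ * (f (x, (q : ℂ) * y) - f (x, (q : ℂ) ^ 2 * y))
        + d * e * (((q : ℂ))⁻¹) ^ 2 * (f (x, (q : ℂ) ^ 2 * y) - f (x, (q : ℂ) ^ 3 * y)))
      = y * ((f (x, y) - f ((q : ℂ) * x, y))
        - (a + b + c) * (f (x, (q : ℂ) * y) - f ((q : ℂ) * x, (q : ℂ) * y))
        + (a * b + a * c + b * c) *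
            (f (x, (q : ℂ) ^ 2 * y) - f ((q : ℂ) * x, (q : ℂ) ^ 2 * y))
        - a * b * c * (f (x, (q : ℂ) ^ 3 * y) - f ((q : ℂ) * x, (q : ℂ) ^ 3 * y))))
    (g : ℂ → ℂ) (hg : ∀ x : ℂ, g x = f (x, 0)) :
    ∃ V : Set (ℂ × ℂ), V ∈ nhds ((0 : ℂ), (0 : ℂ)) ∧ V ⊆ U ∧
      ∀ x y : ℂ, (x, y) ∈ V → x ≠ 0 →
        HasSum (fun n : ℕ =>
          (qPoch (q : ℂ) a n * qPoch (q : ℂ) b n * qPoch (q : ℂ) c n) /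
            (qPoch (q : ℂ) (q : ℂ) n * qPoch (q : ℂ) d n * qPoch (q : ℂ) e n) *
          y ^ n * ((qDeriv (q : ℂ))^[n] g x)) (f (x, y)) := by
  obtain ⟨ε, hε, hball⟩ := Metric.mem_nhds_iff.mp hU
  set Q : ℂ := (q : ℂ) with hQdef
  have hQ0 : Q ≠ 0 := by
    simp only [hQdef, ne_eq, Complex.ofReal_eq_zero]; exact ne_of_gt hq0
  have hQnorm : ‖Q‖ = q := by
    rw [hQdef, Complex.norm_real, Real.norm_eq_abs, abs_of_pos hq0]
  set R : NNReal := ⟨ε / 2, le_of_lt (by positivity)⟩ with hRdef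
  have hRpos : 0 < R := by
    rw [← NNReal.coe_lt_coe]
    show (0 : ℝ) < ε / 2
    positivity
  have hRr : (R : ℝ) = ε / 2 := rfl
  have hRε : (R : ℝ) < ε := by rw [hRr]; linarith
  -- membership in U
  have memU : ∀ x y : ℂ, ‖x‖ ≤ (R : ℝ) → ‖y‖ ≤ (R : ℝ) → (x, y) ∈ U := by
    intro x y hx hy
    apply hball
    rw [Metric.mem_ball, Prod.dist_eq]
    simp only [dist_zero_right]
    exact max_lt (lt_of_le_of_lt hx hRε) (lt_of_le_of_lt hy hRε)
  -- power series in y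
  have hFPS : ∀ x : ℂ, ‖x‖ ≤ (R : ℝ) →
      HasFPowerSeriesOnBall (fun y => f (x, y))
        (cauchyPowerSeries (fun y => f (x, y)) 0 R) 0 R := by
    intro x hx
    refine DifferentiableOn.hasFPowerSeriesOnBall ?_ hRpos
    intro y hy
    rw [Metric.mem_closedBall, dist_zero_right] at hy
    have hmem : (x, y) ∈ U := memU x y hx hy
    have hda : DifferentiableAt ℂ f (x, y) := (hf _ hmem).differentiableAt
    have hcomp : DifferentiableAt ℂ (fun y : ℂ => f (x, y)) y :=
      hda.comp y ((differentiableAt_const x).prodMk differentiableAt_id)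
    exact hcomp.differentiableWithinAt
  set A : ℕ → ℂ → ℂ := fun n x =>
    (cauchyPowerSeries (fun y => f (x, y)) 0 R).coeff n with hAdef
  have hasSumA : ∀ x : ℂ, ‖x‖ ≤ (R : ℝ) → ∀ y : ℂ, ‖y‖ < (R : ℝ) →
      HasSum (fun n => A n x * y ^ n) (f (x, y)) := by
    intro x hx y hy
    have hmem : y ∈ Metric.eball (0 : ℂ) R := by
      rw [Metric.mem_eball, edist_zero_right]
      exact_mod_cast hy
    have h := (hFPS x hx).hasSum hmem
    rw [zero_add] at h
    convert h using 2 with n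
    · rfl
    rw [FormalMultilinearSeries.apply_eq_pow_smul_coeff, smul_eq_mul]
    ring
  -- nonvanishing facts
  have hQpow_ne : ∀ n : ℕ, (1 : ℂ) - Q ^ (n + 1) ≠ 0 := by
    intro n h
    have h2 : Q ^ (n + 1) = 1 := by linear_combination -h
    rw [hQdef, ← Complex.ofReal_pow, ← Complex.ofReal_one, Complex.ofReal_inj] at h2
    have : q ^ (n + 1) < 1 := pow_lt_one₀ (le_of_lt hq0) hq1 (Nat.succ_ne_zero n)
    linarith
  have hdpow_ne : ∀ n : ℕ, (1 : ℂ) - d * Q ^ n ≠ 0 := by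
    intro n h
    have h2 : Q ^ n * d = 1 := by linear_combination -h
    exact hd n (eq_inv_of_mul_eq_one_right h2)
  have hepow_ne : ∀ n : ℕ, (1 : ℂ) - e * Q ^ n ≠ 0 := by
    intro n h
    have h2 : Q ^ n * e = 1 := by linear_combination -h
    exact he n (eq_inv_of_mul_eq_one_right h2)
  -- the coefficient recurrence
  have hrec : ∀ x : ℂ, ‖x‖ ≤ (R : ℝ) → ∀ n : ℕ,
      x * A (n + 1) x * ((1 - Q ^ (n + 1)) * (1 - d * Q ^ n) * (1 - e * Q ^ n))
      = (A n x - A n (Q * x)) * ((1 - a * Q ^ n) * (1 - b * Q ^ n) * (1 - c * Q ^ n)) := by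
    intro x hx
    have hqx : ‖Q * x‖ ≤ (R : ℝ) := by
      rw [norm_mul, hQnorm]
      nlinarith [norm_nonneg x]
    have hnorm : ∀ (k : ℕ) (y : ℂ), ‖y‖ < (R : ℝ) → ‖Q ^ k * y‖ < (R : ℝ) := by
      intro k y hy
      rw [norm_mul, norm_pow, hQnorm]
      have h1 : q ^ k ≤ 1 := pow_le_one₀ (le_of_lt hq0) (le_of_lt hq1)
      nlinarith [norm_nonneg y, pow_pos hq0 k]
    have hnorm1 : ∀ y : ℂ, ‖y‖ < (R : ℝ) → ‖Q * y‖ < (R : ℝ) := by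
      intro y hy
      have := hnorm 1 y hy
      rwa [pow_one] at this
    have hL : ∀ y : ℂ, ‖y‖ < (R : ℝ) → HasSum
        (fun n => (x * A n x *
          ((1 - Q ^ n) * (1 - d * (Q ^ n * Q⁻¹)) * (1 - e * (Q ^ n * Q⁻¹)))) * y ^ n)
        (x * ((f (x, y) - f (x, Q * y))
          - (d + e) * Q⁻¹ * (f (x, Q * y) - f (x, Q ^ 2 * y))
          + d * e * Q⁻¹ ^ 2 * (f (x, Q ^ 2 * y) - f (x, Q ^ 3 * y)))) := by
      intro y hy
      have h0 := hasSumA x hx y hy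
      have h1 := hasSumA x hx (Q * y) (hnorm1 y hy)
      have h2 := hasSumA x hx (Q ^ 2 * y) (hnorm 2 y hy)
      have h3 := hasSumA x hx (Q ^ 3 * y) (hnorm 3 y hy)
      have hcomb := (((h0.sub h1).sub ((h1.sub h2).mul_left ((d + e) * Q⁻¹))).add
        ((h2.sub h3).mul_left (d * e * Q⁻¹ ^ 2))).mul_left x
      convert hcomb using 1
      · rfl
      funext n
      simp only [mul_pow]
      ring
    have hC : ∀ y : ℂ, ‖y‖ < (R : ℝ) → HasSum
        (fun n => (match n with
          | 0 => (0 : ℂ)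
          | (m + 1) => (A m x - A m (Q * x)) *
              ((1 - a * Q ^ m) * (1 - b * Q ^ m) * (1 - c * Q ^ m))) * y ^ n)
        (x * ((f (x, y) - f (x, Q * y))
          - (d + e) * Q⁻¹ * (f (x, Q * y) - f (x, Q ^ 2 * y))
          + d * e * Q⁻¹ ^ 2 * (f (x, Q ^ 2 * y) - f (x, Q ^ 3 * y)))) := by
      intro y hy
      have h0 := hasSumA x hx y hy
      have h1 := hasSumA x hx (Q * y) (hnorm1 y hy)
      have h2 := hasSumA x hx (Q ^ 2 * y) (hnorm 2 y hy)
      have h3 := hasSumA x hx (Q ^ 3 * y) (hnorm 3 y hy)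
      have h0' := hasSumA (Q * x) hqx y hy
      have h1' := hasSumA (Q * x) hqx (Q * y) (hnorm1 y hy)
      have h2' := hasSumA (Q * x) hqx (Q ^ 2 * y) (hnorm 2 y hy)
      have h3' := hasSumA (Q * x) hqx (Q ^ 3 * y) (hnorm 3 y hy)
      have hG := (((h0.sub h0').sub ((h1.sub h1').mul_left (a + b + c))).add
        ((h2.sub h2').mul_left (a * b + a * c + b * c))).sub
        ((h3.sub h3').mul_left (a * b * c))
      have hGy := hG.mul_left y
      have hshift : HasSum (fun n => (match n + 1 with
          | 0 => (0 : ℂ)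
          | (m + 1) => (A m x - A m (Q * x)) *
              ((1 - a * Q ^ m) * (1 - b * Q ^ m) * (1 - c * Q ^ m))) * y ^ (n + 1))
          (y * ((f (x, y) - f (Q * x, y))
            - (a + b + c) * (f (x, Q * y) - f (Q * x, Q * y))
            + (a * b + a * c + b * c) * (f (x, Q ^ 2 * y) - f (Q * x, Q ^ 2 * y))
            - a * b * c * (f (x, Q ^ 3 * y) - f (Q * x, Q ^ 3 * y)))) := by
        convert hGy using 1
        · rfl
        funext n
        simp only [mul_pow]
        ring
      have hfull : HasSum (fun n => (match n with
          | 0 => (0 : ℂ)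
          | (m + 1) => (A m x - A m (Q * x)) *
              ((1 - a * Q ^ m) * (1 - b * Q ^ m) * (1 - c * Q ^ m))) * y ^ n)
          (y * ((f (x, y) - f (Q * x, y))
            - (a + b + c) * (f (x, Q * y) - f (Q * x, Q * y))
            + (a * b + a * c + b * c) * (f (x, Q ^ 2 * y) - f (Q * x, Q ^ 2 * y))
            - a * b * c * (f (x, Q ^ 3 * y) - f (Q * x, Q ^ 3 * y)))) := by
        apply (hasSum_nat_add_iff' 1).mp
        simpa using hshift
      have hU' : (x, y) ∈ U := memU x y hx (le_of_lt hy)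
      rwa [← heq x y hU'] at hfull
    have hun := myUnique hRpos hL hC
    intro n
    have h := hun (n + 1)
    simp only at h
    have hpow : Q ^ (n + 1) * Q⁻¹ = Q ^ n := by
      rw [pow_succ, mul_assoc, mul_inv_cancel₀ hQ0, mul_one]
    rw [hpow] at h
    exact h
  -- the key induction
  have key : ∀ n : ℕ, ∀ x : ℂ, x ≠ 0 → ‖x‖ ≤ (R : ℝ) →
      A n x = (qPoch Q a n * qPoch Q b n * qPoch Q c n) /
        (qPoch Q Q n * qPoch Q d n * qPoch Q e n) * ((qDeriv Q)^[n] g x) := by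
    have hRpos' : (0 : ℝ) < (R : ℝ) := by exact_mod_cast hRpos
    intro n
    induction n with
    | zero =>
      intro x _ hx
      have h0 := hasSumA x hx 0 (by simpa using hRpos')
      have hs : HasSum (fun n => A n x * (0 : ℂ) ^ n) (A 0 x) := by
        have := hasSum_single (f := fun n => A n x * (0 : ℂ) ^ n) 0
          (fun b hb => by simp [zero_pow hb])
        simpa using this
      have hA0 : A 0 x = f (x, 0) := hs.unique h0
      simp [qPoch, hA0, hg x]
    | succ n ih =>
      intro x hx0 hx
      have hqx0 : Q * x ≠ 0 := mul_ne_zero hQ0 hx0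
      have hqxR : ‖Q * x‖ ≤ (R : ℝ) := by
        rw [norm_mul, hQnorm]
        nlinarith [norm_nonneg x]
      have h := hrec x hx n
      rw [ih x hx0 hx, ih (Q * x) hqx0 hqxR] at h
      have hiter : (qDeriv Q)^[n + 1] g x
          = ((qDeriv Q)^[n] g x - (qDeriv Q)^[n] g (Q * x)) / x := by
        rw [Function.iterate_succ_apply']
        rfl
      have hPq : qPoch Q Q n ≠ 0 := by
        refine Finset.prod_ne_zero_iff.mpr (fun j _ => ?_)
        have := hQpow_ne j
        rwa [pow_succ'] at this
      have hPd : qPoch Q d n ≠ 0 := Finset.prod_ne_zero_iff.mpr (fun j _ => hdpow_ne j)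
      have hPe : qPoch Q e n ≠ 0 := Finset.prod_ne_zero_iff.mpr (fun j _ => hepow_ne j)
      have hsQ : qPoch Q Q (n + 1) = qPoch Q Q n * (1 - Q ^ (n + 1)) := by
        rw [qPoch, Finset.prod_range_succ, ← qPoch, ← pow_succ']
      have hsa : qPoch Q a (n + 1) = qPoch Q a n * (1 - a * Q ^ n) := Finset.prod_range_succ _ _
      have hsb : qPoch Q b (n + 1) = qPoch Q b n * (1 - b * Q ^ n) := Finset.prod_range_succ _ _
      have hsc : qPoch Q c (n + 1) = qPoch Q c n * (1 - c * Q ^ n) := Finset.prod_range_succ _ _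
      have hsd : qPoch Q d (n + 1) = qPoch Q d n * (1 - d * Q ^ n) := Finset.prod_range_succ _ _
      have hse : qPoch Q e (n + 1) = qPoch Q e n * (1 - e * Q ^ n) := Finset.prod_range_succ _ _
      rw [hiter, hsQ, hsa, hsb, hsc, hsd, hse]
      field_simp at h
      rw [mul_comm x Q] at h
      rw [div_mul_div_comm, eq_div_iff (mul_ne_zero (mul_ne_zero (mul_ne_zero
        (mul_ne_zero hPq (hQpow_ne n)) (mul_ne_zero hPd (hdpow_ne n)))
        (mul_ne_zero hPe (hepow_ne n))) hx0)]
      linear_combination h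
  -- conclusion
  refine ⟨Metric.ball ((0 : ℂ), (0 : ℂ)) (R : ℝ), Metric.ball_mem_nhds _ (by exact_mod_cast hRpos),
    fun p hp => hball (Metric.ball_subset_ball (le_of_lt hRε) hp), ?_⟩
  intro x y hxy hx0
  rw [Metric.mem_ball, Prod.dist_eq] at hxy
  simp only [dist_zero_right] at hxy
  have hxR : ‖x‖ ≤ (R : ℝ) := le_of_lt (lt_of_le_of_lt (le_max_left _ _) hxy)
  have hyR : ‖y‖ < (R : ℝ) := lt_of_le_of_lt (le_max_right _ _) hxy
  have h := hasSumA x hxR y hyR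
  have hfun : (fun n : ℕ =>
      (qPoch Q a n * qPoch Q b n * qPoch Q c n) /
        (qPoch Q Q n * qPoch Q d n * qPoch Q e n) *
      y ^ n * ((qDeriv Q)^[n] g x)) = fun n => A n x * y ^ n := by
    funext n
    rw [key n x hx0 hxR]
    ring
  rw [hfun]
  exact h
end

section
/- Let q be real with 0 < q < 1, and fix a, b, c, d, e ∈ ℂ with d, e ∉ {q^{−j} : j ∈ ℕ}. For all x, y, t ∈ ℂ with max{|xt|, |yt|} < 1, the series ∑_{n=0}^∞ φ_n^{(a,b,c;d,e)}(x,y|q) · t^n/(q;q)_n converges and equals (1/(xt;q)_∞) · ∑_{n=0}^∞ ((a,b,c;q)_n/((q;q)_n (d,e;q)_n)) (yt)^n. -/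
noncomputable def qPochInf (q a : ℂ) : ℂ := ∏' j : ℕ, (1 - a * q ^ j)

noncomputable def qBinom (q : ℂ) (n k : ℕ) : ℂ := qPoch q q n / (qPoch q q k * qPoch q q (n - k))

/-- Generalized Al-Salam--Carlitz polynomial φ_n^{(a,b,c;d,e)}(x,y|q). -/
noncomputable def phiACP (q a b c d e x y : ℂ) (n : ℕ) : ℂ :=
  ∑ k ∈ Finset.range (n + 1),
    qBinom q n k * (qPoch q a k * qPoch q b k * qPoch q c k) / (qPoch q d k * qPoch q e k) *
      x ^ (n - k) * y ^ k

/-- Second generalized Al-Salam--Carlitz polynomial ψ_n^{(a,b,c;d,e)}(x,y|q). -/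
noncomputable def psiACP (q a b c d e x y : ℂ) (n : ℕ) : ℂ :=
  ∑ k ∈ Finset.range (n + 1),
    qBinom q n k * (-1) ^ k * q ^ ((k : ℤ) * ((k : ℤ) - (n : ℤ))) *
      (qPoch q a k * qPoch q b k * qPoch q c k) / (qPoch q d k * qPoch q e k) *
      x ^ (n - k) * y ^ k




open Finset Filter Topology

lemma qPoch_succ (q a : ℂ) (n : ℕ) : qPoch q a (n+1) = qPoch q a n * (1 - a * q ^ n) :=
  Finset.prod_range_succ _ _

lemma qPoch_zero (q : ℂ) (n : ℕ) : qPoch q 0 n = 1 := by simp [qPoch]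

lemma qPoch_zeroth (q a : ℂ) : qPoch q a 0 = 1 := rfl

lemma qPoch_q_real (q : ℝ) (n : ℕ) :
    qPoch (q:ℂ) (q:ℂ) n = ((∏ j ∈ Finset.range n, (1 - q * q ^ j) : ℝ) : ℂ) := by
  rw [qPoch]; push_cast; ring_nf

lemma prodq_pos {q : ℝ} (hq0 : 0 < q) (hq1 : q < 1) (n : ℕ) :
    0 < ∏ j ∈ Finset.range n, (1 - q * q ^ j) := by
  apply Finset.prod_pos
  intro j _
  have h1 : q * q ^ j ≤ q * 1 := by
    have := pow_le_one₀ hq0.le hq1.le (n := j)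
    nlinarith
  linarith

lemma qPoch_q_ne {q : ℝ} (hq0 : 0 < q) (hq1 : q < 1) (n : ℕ) :
    qPoch (q:ℂ) (q:ℂ) n ≠ 0 := by
  rw [qPoch_q_real]
  exact_mod_cast (prodq_pos hq0 hq1 n).ne'

lemma qPoch_norm {q : ℝ} (hq0 : 0 < q) (hq1 : q < 1) (n : ℕ) :
    ‖qPoch (q:ℂ) (q:ℂ) n‖ = ∏ j ∈ Finset.range n, (1 - q * q ^ j) := by
  rw [qPoch_q_real, Complex.norm_real, Real.norm_of_nonneg (prodq_pos hq0 hq1 n).le]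

lemma factor_q_ne {q : ℝ} (hq0 : 0 < q) (hq1 : q < 1) (n : ℕ) :
    (1 : ℂ) - (q:ℂ) * (q:ℂ) ^ n ≠ 0 := by
  have h : (0:ℝ) < 1 - q * q ^ n := by
    have h1 : q * q ^ n ≤ q * 1 := by
      have := pow_le_one₀ hq0.le hq1.le (n := n); nlinarith
    linarith
  intro hc
  have h2 : ((1 - q * q ^ n : ℝ) : ℂ) = 0 := by push_cast; linear_combination hc
  rw [Complex.ofReal_eq_zero] at h2
  linarith

lemma qPoch_ne_of {q : ℝ} (hq0 : 0 < q) (d : ℂ)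
    (hd : ∀ j : ℕ, d ≠ (((q:ℂ)) ^ j)⁻¹) (n : ℕ) : qPoch (q:ℂ) d n ≠ 0 := by
  rw [qPoch]
  apply Finset.prod_ne_zero_iff.mpr
  intro j _
  intro hc
  have hqj : ((q:ℂ)) ^ j ≠ 0 := pow_ne_zero _ (by exact_mod_cast hq0.ne')
  apply hd j
  field_simp
  linear_combination -hc

lemma factor_ne_of {q : ℝ} (hq0 : 0 < q) (d : ℂ)
    (hd : ∀ j : ℕ, d ≠ (((q:ℂ)) ^ j)⁻¹) (n : ℕ) : (1:ℂ) - d * (q:ℂ) ^ n ≠ 0 := by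
  intro hc
  have hqj : ((q:ℂ)) ^ n ≠ 0 := pow_ne_zero _ (by exact_mod_cast hq0.ne')
  apply hd n
  field_simp
  linear_combination -hc

lemma auxSummable (q : ℝ) (hq0 : 0 < q) (hq1 : q < 1) (a b c d e : ℂ)
    (hd : ∀ j : ℕ, d ≠ (((q : ℂ)) ^ j)⁻¹) (he : ∀ j : ℕ, e ≠ (((q : ℂ)) ^ j)⁻¹)
    (z : ℂ) (hz : ‖z‖ < 1) :
    Summable (fun n : ℕ => ‖(qPoch (q:ℂ) a n * qPoch (q:ℂ) b n * qPoch (q:ℂ) c n) /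
      (qPoch (q:ℂ) (q:ℂ) n * qPoch (q:ℂ) d n * qPoch (q:ℂ) e n) * z ^ n‖) := by
  set K : ℂ := (q:ℂ) with hK
  set f : ℕ → ℂ := fun n => (qPoch K a n * qPoch K b n * qPoch K c n) /
      (qPoch K K n * qPoch K d n * qPoch K e n) * z ^ n with hf
  set r : ℕ → ℂ := fun n => (1 - a * K ^ n) * (1 - b * K ^ n) * (1 - c * K ^ n) /
      ((1 - K * K ^ n) * (1 - d * K ^ n) * (1 - e * K ^ n)) * z with hr
  have hrec : ∀ n, f (n + 1) = f n * r n := by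
    intro n
    simp only [hf, hr, qPoch_succ]
    have h1 := qPoch_q_ne hq0 hq1 n
    have h2 := qPoch_ne_of hq0 d hd n
    have h3 := qPoch_ne_of hq0 e he n
    have h4 := factor_q_ne hq0 hq1 n
    have h5 := factor_ne_of hq0 d hd n
    have h6 := factor_ne_of hq0 e he n
    simp only [div_eq_mul_inv, mul_inv]
    ring
  by_cases hzero : ∃ m, f m = 0
  · obtain ⟨m, hm⟩ := hzero
    have hall : ∀ n, m ≤ n → f n = 0 := by
      intro n hn
      induction n, hn using Nat.le_induction with
      | base => exact hm
      | succ n hn ih => rw [hrec, ih, zero_mul]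
    apply summable_of_ne_finset_zero (s := Finset.range (m+1))
    intro n hn
    simp only [Finset.mem_range, not_lt] at hn
    show ‖f n‖ = 0
    rw [hall n (by omega), norm_zero]
  · push_neg at hzero
    apply summable_of_ratio_test_tendsto_lt_one hz
    · exact Eventually.of_forall fun n =>
        show ‖f n‖ ≠ 0 from norm_ne_zero_iff.mpr (hzero n)
    · have hratio : (fun n => ‖‖f (n+1)‖‖ / ‖‖f n‖‖) = fun n => ‖r n‖ := by
        funext n
        rw [Real.norm_of_nonneg (norm_nonneg _), Real.norm_of_nonneg (norm_nonneg _),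
          hrec, norm_mul, mul_comm, mul_div_assoc, div_self (norm_ne_zero_iff.mpr (hzero n)),
          mul_one]
      rw [hratio]
      have hq0' : Tendsto (fun n : ℕ => K ^ n) atTop (𝓝 0) := by
        apply tendsto_pow_atTop_nhds_zero_of_norm_lt_one
        rw [hK, Complex.norm_real, Real.norm_of_nonneg hq0.le]
        exact hq1
      have hcont : ContinuousAt (fun u : ℂ => ‖(1 - a * u) * (1 - b * u) * (1 - c * u) /
          ((1 - K * u) * (1 - d * u) * (1 - e * u)) * z‖) 0 := by
        apply ContinuousAt.norm
        apply ContinuousAt.mul _ continuousAt_const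
        apply ContinuousAt.div
        · fun_prop
        · fun_prop
        · norm_num
      have := hcont.tendsto.comp hq0'
      simp only [Function.comp_def] at this
      convert this using 2
      · norm_num


lemma euler (q : ℝ) (hq0 : 0 < q) (hq1 : q < 1) (w : ℂ) (hw : ‖w‖ < 1) :
    HasSum (fun n : ℕ => w ^ n / qPoch (q:ℂ) (q:ℂ) n) ((qPochInf (q:ℂ) w)⁻¹) := by
  set K : ℂ := (q:ℂ) with hKdef
  have hKne : K ≠ 0 := by rw [hKdef]; exact_mod_cast hq0.ne'
  have habsK : ‖K‖ = q := by
    rw [hKdef, Complex.norm_real, Real.norm_of_nonneg hq0.le]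
  -- summability of the series for any |u| < 1
  have key : ∀ u : ℂ, ‖u‖ < 1 → Summable (fun n : ℕ => ‖u ^ n / qPoch K K n‖) := by
    intro u hu
    have h0 : ∀ j : ℕ, (0:ℂ) ≠ ((q:ℂ) ^ j)⁻¹ := by
      intro j hc
      exact (inv_ne_zero (pow_ne_zero j (by exact_mod_cast hq0.ne'))) hc.symm
    have := auxSummable q hq0 hq1 0 0 0 0 0 h0 h0 u hu
    refine this.congr fun n => ?_
    congr 1
    simp only [qPoch_zero]
    ring
  set Sf : ℂ → ℂ := fun u => ∑' n : ℕ, u ^ n / qPoch K K n with hSf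
  -- functional equation
  have func : ∀ u : ℂ, ‖u‖ < 1 → (1 - u) * Sf u = Sf (K * u) := by
    intro u hu
    have hs : HasSum (fun n : ℕ => u ^ n / qPoch K K n) (Sf u) := ((key u hu).of_norm).hasSum
    have h2 : HasSum (fun n : ℕ => u * (u ^ n / qPoch K K n)) (u * Sf u) := hs.mul_left u
    set g0 : ℕ → ℂ := fun n => Nat.rec 0 (fun m _ => u ^ (m+1) / qPoch K K m) n with hg0
    have h3 : HasSum g0 (u * Sf u) := by
      have heq : (fun n : ℕ => g0 (n + 1)) = fun n : ℕ => u * (u ^ n / qPoch K K n) := by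
        funext n
        show u ^ (n+1) / qPoch K K n = _
        rw [pow_succ]; ring
      have h4 : HasSum (fun n : ℕ => g0 (n + 1)) (u * Sf u) := heq ▸ h2
      have h5 := (hasSum_nat_add_iff (f := g0) 1).mp h4
      rw [Finset.sum_range_one] at h5
      rwa [show g0 0 = 0 from rfl, add_zero] at h5
    have h6 := hs.sub h3
    have h7 : (fun n : ℕ => u ^ n / qPoch K K n - g0 n)
        = fun n : ℕ => (K * u) ^ n / qPoch K K n := by
      funext n
      cases n with
      | zero => rw [show g0 0 = 0 from rfl]; simp [qPoch]
      | succ m =>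
        show u ^ (m+1) / qPoch K K (m+1) - u ^ (m+1) / qPoch K K m = _
        rw [qPoch_succ]
        have h1 : qPoch K K m ≠ 0 := qPoch_q_ne hq0 hq1 m
        have h4 : (1:ℂ) - K * K ^ m ≠ 0 := factor_q_ne hq0 hq1 m
        rw [div_sub_div _ _ (mul_ne_zero h1 h4) h1,
          div_eq_div_iff (mul_ne_zero (mul_ne_zero h1 h4) h1) (mul_ne_zero h1 h4)]
        ring
    rw [h7] at h6
    have := h6.tsum_eq
    show (1 - u) * Sf u = ∑' n : ℕ, (K * u) ^ n / qPoch K K n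
    rw [this]; ring
  -- iterated functional equation
  have habspow : ∀ N : ℕ, ‖K ^ N * w‖ ≤ ‖w‖ := by
    intro N
    rw [norm_mul, norm_pow, habsK]
    calc q ^ N * ‖w‖ ≤ 1 * ‖w‖ :=
          mul_le_mul_of_nonneg_right (pow_le_one₀ hq0.le hq1.le) (norm_nonneg w)
      _ = ‖w‖ := one_mul _
  have iter : ∀ N : ℕ, qPoch K w N * Sf w = Sf (K ^ N * w) := by
    intro N
    induction N with
    | zero => simp [qPoch]
    | succ N ih =>
      have habs : ‖K ^ N * w‖ < 1 := lt_of_le_of_lt (habspow N) hw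
      have hfe := func (K ^ N * w) habs
      rw [qPoch_succ]
      calc qPoch K w N * (1 - w * K ^ N) * Sf w
          = (1 - K ^ N * w) * (qPoch K w N * Sf w) := by ring
        _ = (1 - K ^ N * w) * Sf (K ^ N * w) := by rw [ih]
        _ = Sf (K * (K ^ N * w)) := hfe
        _ = Sf (K ^ (N+1) * w) := by rw [show K * (K ^ N * w) = K ^ (N+1) * w by ring]
  -- quantitative bound near 0
  set C : ℝ := ∑' n : ℕ, ‖w ^ n / qPoch K K n‖ with hC
  have h1q : (0:ℝ) < 1 - q := by linarith
  have hbound : ∀ u : ℂ, ‖u‖ ≤ ‖w‖ →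
      ‖Sf u - 1‖ ≤ ‖u‖ * ((1-q)⁻¹ * C) := by
    intro u hu_le
    have hu1 : ‖u‖ < 1 := lt_of_le_of_lt hu_le hw
    have hsu : HasSum (fun n : ℕ => u ^ n / qPoch K K n) (Sf u) := ((key u hu1).of_norm).hasSum
    have hshift : HasSum (fun n : ℕ => u ^ (n+1) / qPoch K K (n+1)) (Sf u - 1) := by
      rw [hasSum_nat_add_iff (f := fun n : ℕ => u ^ n / qPoch K K n) 1]
      simpa [qPoch] using hsu
    have hterm : ∀ n : ℕ, ‖u ^ (n+1) / qPoch K K (n+1)‖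
        ≤ ‖u‖ * ((1-q)⁻¹ * ‖w ^ n / qPoch K K n‖) := by
      intro n
      rw [norm_div, norm_div, norm_pow, norm_pow, qPoch_norm hq0 hq1, qPoch_norm hq0 hq1]
      have hPn := prodq_pos hq0 hq1 n
      have hPn1 := prodq_pos hq0 hq1 (n+1)
      have hq1n : 1 - q ≤ 1 - q * q ^ n := by
        nlinarith [pow_le_one₀ hq0.le hq1.le (n := n)]
      have hPrec : (∏ j ∈ Finset.range (n+1), (1 - q*q^j))
          = (∏ j ∈ Finset.range n, (1 - q*q^j)) * (1 - q*q^n) := Finset.prod_range_succ _ _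
      have hu_pow : ‖u‖ ^ (n+1) ≤ ‖u‖ * ‖w‖ ^ n := by
        rw [pow_succ, mul_comm]
        exact mul_le_mul_of_nonneg_left
          (pow_le_pow_left₀ (norm_nonneg u) hu_le n) (norm_nonneg u)
      have hrhs : ‖u‖ * ((1-q)⁻¹ * (‖w‖ ^ n / ∏ j ∈ Finset.range n, (1 - q*q^j)))
          = (‖u‖ * ‖w‖ ^ n) / ((1-q) * ∏ j ∈ Finset.range n, (1 - q*q^j)) := by
        field_simp
      rw [hrhs, div_le_div_iff₀ hPn1 (by positivity)]
      calc ‖u‖ ^ (n+1) * ((1-q) * ∏ j ∈ Finset.range n, (1 - q*q^j))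
          ≤ (‖u‖ * ‖w‖ ^ n) * ((1-q) * ∏ j ∈ Finset.range n, (1 - q*q^j)) := by
            apply mul_le_mul_of_nonneg_right hu_pow (by positivity)
        _ ≤ (‖u‖ * ‖w‖ ^ n) * ((1 - q*q^n) * ∏ j ∈ Finset.range n, (1 - q*q^j)) := by
            apply mul_le_mul_of_nonneg_left
              (mul_le_mul_of_nonneg_right hq1n hPn.le) (by positivity)
        _ = (‖u‖ * ‖w‖ ^ n) * (∏ j ∈ Finset.range (n+1), (1 - q*q^j)) := by
            rw [hPrec]; ring
    have hsshift : Summable (fun n : ℕ => ‖u ^ (n+1) / qPoch K K (n+1)‖) :=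
      (summable_nat_add_iff (f := fun n : ℕ => ‖u ^ n / qPoch K K n‖) 1).mpr (key u hu1)
    have hsum2 : Summable (fun n : ℕ => ‖u‖ * ((1-q)⁻¹ * ‖w ^ n / qPoch K K n‖)) :=
      ((key w hw).mul_left _).mul_left _
    calc ‖Sf u - 1‖ = ‖∑' n : ℕ, u ^ (n+1) / qPoch K K (n+1)‖ := by rw [hshift.tsum_eq]
      _ ≤ ∑' n : ℕ, ‖u ^ (n+1) / qPoch K K (n+1)‖ := norm_tsum_le_tsum_norm hsshift
      _ ≤ ∑' n : ℕ, ‖u‖ * ((1-q)⁻¹ * ‖w ^ n / qPoch K K n‖) :=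
          Summable.tsum_le_tsum hterm hsshift hsum2
      _ = ‖u‖ * ((1-q)⁻¹ * C) := by rw [tsum_mul_left, tsum_mul_left]
  -- Sf (K^N w) → 1
  have htend1 : Tendsto (fun N : ℕ => Sf (K ^ N * w)) atTop (𝓝 1) := by
    rw [tendsto_iff_norm_sub_tendsto_zero]
    apply squeeze_zero (fun N => norm_nonneg _)
      (g := fun N => q ^ N * (‖w‖ * ((1-q)⁻¹ * C)))
    · intro N
      have := hbound (K ^ N * w) (habspow N)
      calc ‖Sf (K ^ N * w) - 1‖ ≤ ‖K ^ N * w‖ * ((1-q)⁻¹ * C) := this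
        _ = q ^ N * (‖w‖ * ((1-q)⁻¹ * C)) := by
            rw [norm_mul, norm_pow, habsK]; ring
    · have := (tendsto_pow_atTop_nhds_zero_of_lt_one hq0.le hq1).mul_const
        (‖w‖ * ((1-q)⁻¹ * C))
      simpa using this
  -- multipliability of the infinite product
  have hfacne : ∀ j : ℕ, (1:ℂ) - w * K ^ j ≠ 0 := by
    intro j hc
    have h1 : ‖w * K ^ j‖ < 1 := by
      rw [norm_mul, norm_pow, habsK]
      calc ‖w‖ * q ^ j ≤ ‖w‖ * 1 :=
            mul_le_mul_of_nonneg_left (pow_le_one₀ hq0.le hq1.le) (norm_nonneg w)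
        _ = ‖w‖ := mul_one _
        _ < 1 := hw
    have h2 : w * K ^ j = 1 := by linear_combination -hc
    rw [h2] at h1
    simp at h1
  have hmult : Multipliable (fun j : ℕ => 1 - w * K ^ j) := by
    apply Complex.multipliable_of_summable_log
    apply Summable.of_norm_bounded_eventually_nat
      (g := fun j => 3/2 * (‖w‖ * q ^ j))
      (((summable_geometric_of_lt_one hq0.le hq1).mul_left _).mul_left _)
    have hev : ∀ᶠ j : ℕ in atTop, ‖w‖ * q ^ j ≤ 1/2 := by
      have h2 : Tendsto (fun j : ℕ => ‖w‖ * q ^ j) atTop (𝓝 0) := by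
        have := (tendsto_pow_atTop_nhds_zero_of_lt_one hq0.le hq1).const_mul (‖w‖)
        simpa using this
      exact h2.eventually_le_const (by norm_num)
    filter_upwards [hev] with j hj
    have hz2 : ‖-(w * K ^ j)‖ ≤ 1/2 := by
      rw [norm_neg, norm_mul, norm_pow, habsK]
      exact hj
    have := Complex.norm_log_one_add_half_le_self hz2
    rw [show (1:ℂ) + -(w * K ^ j) = 1 - w * K ^ j by ring] at this
    calc ‖Complex.log (1 - w * K ^ j)‖ ≤ 3/2 * ‖-(w * K ^ j)‖ := this
      _ = 3/2 * (‖w‖ * q ^ j) := by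
          rw [norm_neg, norm_mul, norm_pow, habsK]
  have hprod : Tendsto (fun N : ℕ => qPoch K w N) atTop (𝓝 (qPochInf K w)) :=
    hmult.hasProd.tendsto_prod_nat
  have h1 : Tendsto (fun N : ℕ => qPoch K w N * Sf w) atTop (𝓝 (qPochInf K w * Sf w)) :=
    hprod.mul_const _
  have h2 : Tendsto (fun N : ℕ => qPoch K w N * Sf w) atTop (𝓝 1) := by
    simp_rw [iter]; exact htend1
  have hone : qPochInf K w * Sf w = 1 := tendsto_nhds_unique h1 h2
  have hinv : (qPochInf K w)⁻¹ = Sf w := inv_eq_of_mul_eq_one_right hone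
  rw [hinv]
  exact ((key w hw).of_norm).hasSum







/-- generating function for φ_n^{(a,b,c;d,e)}(x,y|q). -/
theorem stmt4 (q : ℝ) (hq0 : 0 < q) (hq1 : q < 1)
    (a b c d e : ℂ)
    (hd : ∀ j : ℕ, d ≠ (((q : ℂ)) ^ j)⁻¹) (he : ∀ j : ℕ, e ≠ (((q : ℂ)) ^ j)⁻¹)
    (x y t : ℂ) (hxt : ‖x * t‖ < 1) (hyt : ‖y * t‖ < 1) :
    HasSum (fun n : ℕ => phiACP (q : ℂ) a b c d e x y n * t ^ n / qPoch (q : ℂ) (q : ℂ) n)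
      ((qPochInf (q : ℂ) (x * t))⁻¹ *
        ∑' n : ℕ, (qPoch (q : ℂ) a n * qPoch (q : ℂ) b n * qPoch (q : ℂ) c n) /
          (qPoch (q : ℂ) (q : ℂ) n * qPoch (q : ℂ) d n * qPoch (q : ℂ) e n) * (y * t) ^ n) := by
  set K : ℂ := (q:ℂ) with hKdef
  set A : ℕ → ℂ := fun n => (qPoch K a n * qPoch K b n * qPoch K c n) /
      (qPoch K K n * qPoch K d n * qPoch K e n) * (y*t) ^ n with hA
  set B : ℕ → ℂ := fun n => (x*t) ^ n / qPoch K K n with hB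
  have hAnorm : Summable (fun n => ‖A n‖) := auxSummable q hq0 hq1 a b c d e hd he (y*t) hyt
  have hBnorm : Summable (fun n => ‖B n‖) := by
    have h0 : ∀ j : ℕ, (0:ℂ) ≠ ((q:ℂ) ^ j)⁻¹ := by
      intro j hc
      exact (inv_ne_zero (pow_ne_zero j (by exact_mod_cast hq0.ne'))) hc.symm
    have := auxSummable q hq0 hq1 0 0 0 0 0 h0 h0 (x*t) hxt
    refine this.congr fun n => ?_
    congr 1
    simp only [qPoch_zero]
    ring
  have hEuler : HasSum B ((qPochInf K (x*t))⁻¹) := euler q hq0 hq1 (x*t) hxt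
  have main := hasSum_sum_range_mul_of_summable_norm hAnorm hBnorm
  have hval : (∑' n, A n) * (∑' n, B n) = (qPochInf K (x * t))⁻¹ * ∑' n, A n := by
    rw [hEuler.tsum_eq, mul_comm]
  rw [hval] at main
  have hpt : (fun n : ℕ => ∑ k ∈ Finset.range (n+1), A k * B (n-k)) =
      fun n : ℕ => phiACP K a b c d e x y n * t ^ n / qPoch K K n := by
    funext n
    rw [phiACP, Finset.sum_mul, Finset.sum_div]
    apply Finset.sum_congr rfl
    intro k hk
    rw [Finset.mem_range] at hk
    have hkn : k ≤ n := by omega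
    have ht : t ^ n = t ^ k * t ^ (n-k) := by rw [← pow_add, Nat.add_sub_cancel' hkn]
    have h1 : qPoch K K n ≠ 0 := qPoch_q_ne hq0 hq1 n
    have h2 := qPoch_q_ne hq0 hq1 k
    have h3 := qPoch_q_ne hq0 hq1 (n-k)
    have h4 := qPoch_ne_of hq0 d hd k
    have h5 := qPoch_ne_of hq0 e he k
    show (qPoch K a k * qPoch K b k * qPoch K c k) /
        (qPoch K K k * qPoch K d k * qPoch K e k) * (y*t) ^ k *
        ((x*t) ^ (n-k) / qPoch K K (n-k)) = _
    rw [qBinom, mul_pow, mul_pow, ht]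
    linear_combination (-(qPoch K a k * qPoch K b k * qPoch K c k * (qPoch K K k)⁻¹ *
      (qPoch K d k)⁻¹ * (qPoch K e k)⁻¹ * y ^ k * t ^ k * x ^ (n-k) * t ^ (n-k) *
      (qPoch K K (n-k))⁻¹)) * mul_inv_cancel₀ h1
  rwa [hpt] at main
end

section
/- Let q be real with 0 < q < 1, and let f : ℂ × ℂ → ℂ be analytic in a neighborhood U of (0,0) ∈ ℂ². Suppose that for all (a,b) ∈ U one has b·f(qa, b) − a·f(a, qb) = (b − a)·f(a,b). Let g : ℂ → ℂ be g(a) = f(a,0). Then there is a neighborhood V ⊆ U of (0,0) such that for all (a,b) ∈ V with a ≠ 0, the series ∑_{n=0}^∞ (b^n/(q;q)_n) · (D_q^n g)(a) converges to f(a,b). -/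
/-- Uniqueness of coefficients for one-variable power series summing to zero. -/
private lemma aux_zero {d : ℕ → ℂ} {r : ℝ} (hr : 0 < r)
    (h : ∀ b : ℂ, ‖b‖ < r → HasSum (fun n => d n * b ^ n) 0) : ∀ n, d n = 0 := by
  have hQ : HasFPowerSeriesAt (0 : ℂ → ℂ) (FormalMultilinearSeries.ofScalars ℂ d) 0 := by
    rw [hasFPowerSeriesAt_iff]
    filter_upwards [Metric.ball_mem_nhds (0 : ℂ) hr] with z hz
    have hz' : ‖z‖ < r := by simpa [Metric.mem_ball, dist_zero_right] using hz
    have := h z hz'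
    have hcoeff : ∀ n, (FormalMultilinearSeries.ofScalars ℂ d).coeff n = d n := by
      intro n
      show (FormalMultilinearSeries.ofScalars ℂ d) n (fun _ => (1 : ℂ)) = d n
      rw [FormalMultilinearSeries.ofScalars_apply_eq]
      simp
    simp only [hcoeff, smul_eq_mul, Pi.zero_apply]
    simpa [mul_comm] using this
  intro n
  have h0 := hQ.eq_zero
  have := congrFun h0 n
  exact (FormalMultilinearSeries.ofScalars_eq_zero ℂ n).mp this

/-- Liu's q-difference equation characterization (first operator). -/
theorem stmt18 (q : ℝ) (hq0 : 0 < q) (hq1 : q < 1)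
    (f : ℂ × ℂ → ℂ) (U : Set (ℂ × ℂ)) (hU : U ∈ nhds ((0 : ℂ), (0 : ℂ)))
    (hf : AnalyticOnNhd ℂ f U)
    (heq : ∀ a b : ℂ, (a, b) ∈ U →
      b * f ((q : ℂ) * a, b) - a * f (a, (q : ℂ) * b) = (b - a) * f (a, b))
    (g : ℂ → ℂ) (hg : ∀ a : ℂ, g a = f (a, 0)) :
    ∃ V : Set (ℂ × ℂ), V ∈ nhds ((0 : ℂ), (0 : ℂ)) ∧ V ⊆ U ∧
      ∀ a b : ℂ, (a, b) ∈ V → a ≠ 0 →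
        HasSum (fun n : ℕ =>
          b ^ n / qPoch (q : ℂ) (q : ℂ) n * ((qDeriv (q : ℂ))^[n] g a)) (f (a, b)) := by
  classical
  obtain ⟨ε, hε, hball⟩ := Metric.mem_nhds_iff.mp hU
  set ρ : ℝ := ε / 2 with hρdef
  have hρ : 0 < ρ := half_pos hε
  have hqc : ‖(q : ℂ)‖ = q := by
    rw [Complex.norm_real, Real.norm_eq_abs, abs_of_pos hq0]
  have hρU : ∀ x : ℂ × ℂ, ‖x.1‖ ≤ ρ → ‖x.2‖ ≤ ρ → x ∈ U := by
    intro x h1 h2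
    apply hball
    rw [Metric.mem_ball, Prod.dist_eq]
    simp only [dist_zero_right]
    have : ρ < ε := by simp [hρdef]; linarith
    exact max_lt (lt_of_le_of_lt h1 this) (lt_of_le_of_lt h2 this)
  set R : NNReal := ⟨ρ, hρ.le⟩ with hRdef
  have hRρ : (R : ℝ) = ρ := rfl
  have hdiff : ∀ a : ℂ, ‖a‖ ≤ ρ →
      DifferentiableOn ℂ (fun b => f (a, b)) (Metric.closedBall 0 (R : ℝ)) := by
    intro a ha b hb
    have hb' : ‖b‖ ≤ ρ := by
      simpa [Metric.mem_closedBall, dist_zero_right, hRρ] using hb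
    have hmem : (a, b) ∈ U := hρU (a, b) ha hb'
    have hfa : DifferentiableAt ℂ f (a, b) := (hf _ hmem).differentiableAt
    exact (hfa.comp b ((differentiableAt_const a).prodMk differentiableAt_id)).differentiableWithinAt
  have hps : ∀ a : ℂ, ‖a‖ ≤ ρ → HasFPowerSeriesOnBall (fun b => f (a, b))
      (cauchyPowerSeries (fun b => f (a, b)) 0 (R : ℝ)) 0 R := by
    intro a ha
    exact (hdiff a ha).hasFPowerSeriesOnBall (by exact_mod_cast hρ)
  set c : ℕ → ℂ → ℂ := fun n a => (cauchyPowerSeries (fun b => f (a, b)) 0 (R : ℝ)).coeff n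
    with hcdef
  have hA : ∀ a b : ℂ, ‖a‖ ≤ ρ → ‖b‖ < ρ → HasSum (fun n => c n a * b ^ n) (f (a, b)) := by
    intro a b ha hb
    have hmem : b ∈ Metric.eball (0 : ℂ) R := by
      rw [Metric.emetric_ball_nnreal]
      simpa [Metric.mem_ball, dist_zero_right, hRρ] using hb
    have := (hps a ha).hasSum hmem
    simp only [FormalMultilinearSeries.apply_eq_pow_smul_coeff, smul_eq_mul, zero_add] at this
    simpa [mul_comm] using this
  have hB : ∀ a : ℂ, ‖a‖ ≤ ρ → c 0 a = g a := by
    intro a ha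
    have := (hps a ha).coeff_zero (fun _ => 1)
    rw [hg a]
    exact this
  have hrec : ∀ a : ℂ, ‖a‖ ≤ ρ → ∀ n : ℕ,
      c n a - c n ((q : ℂ) * a) = a * (1 - (q : ℂ) ^ (n + 1)) * c (n + 1) a := by
    intro a ha
    have haq : ‖(q : ℂ) * a‖ ≤ ρ := by
      rw [norm_mul, hqc]
      nlinarith [norm_nonneg a]
    set d : ℕ → ℂ := fun m =>
      (match m with | 0 => (0 : ℂ) | (k + 1) => c k ((q : ℂ) * a) - c k a)
        + a * c m a - a * (q : ℂ) ^ m * c m a with hddef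
    have key : ∀ m, d m = 0 := by
      apply aux_zero hρ
      intro b hb
      have hmem : (a, b) ∈ U := hρU (a, b) ha hb.le
      have hqb : ‖(q : ℂ) * b‖ < ρ := by
        rw [norm_mul, hqc]
        nlinarith [norm_nonneg b]
      have h1 := (hA ((q : ℂ) * a) b haq hb).mul_right b
      have h3 := (hA a b ha hb).mul_right b
      have h2 := (hA a ((q : ℂ) * b) ha hqb).mul_left a
      have h4 := (hA a b ha hb).mul_left a
      set E1 : ℕ → ℂ := fun m =>
        (match m with | 0 => (0 : ℂ) | (k + 1) => c k ((q : ℂ) * a) * b ^ k * b) with hE1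
      set E3 : ℕ → ℂ := fun m =>
        (match m with | 0 => (0 : ℂ) | (k + 1) => c k a * b ^ k * b) with hE3
      have h1s : HasSum (fun n => E1 (n + 1)) (f ((q : ℂ) * a, b) * b) := h1
      have h3s : HasSum (fun n => E3 (n + 1)) (f (a, b) * b) := h3
      have e10 : E1 0 = 0 := rfl
      have h1' : HasSum E1 (f ((q : ℂ) * a, b) * b) := by
        have := (hasSum_nat_add_iff (f := E1) 1).mp h1s
        simpa [e10] using this
      have e30 : E3 0 = 0 := rfl
      have h3' : HasSum E3 (f (a, b) * b) := by
        have := (hasSum_nat_add_iff (f := E3) 1).mp h3s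
        simpa [e30] using this
      have hcomb := (h1'.sub h2).sub (h3'.sub h4)
      have hval : f ((q : ℂ) * a, b) * b - a * f (a, (q : ℂ) * b)
          - (f (a, b) * b - a * f (a, b)) = 0 := by
        linear_combination heq a b hmem
      have hfun : (fun m => d m * b ^ m)
          = fun m => E1 m - a * (c m a * ((q : ℂ) * b) ^ m) - (E3 m - a * (c m a * b ^ m)) := by
        funext m
        cases m with
        | zero => simp [hddef, hE1, hE3]
        | succ k =>
          show ((c k ((q : ℂ) * a) - c k a) + a * c (k + 1) a
              - a * (q : ℂ) ^ (k + 1) * c (k + 1) a) * b ^ (k + 1)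
            = c k ((q : ℂ) * a) * b ^ k * b - a * (c (k + 1) a * ((q : ℂ) * b) ^ (k + 1))
              - (c k a * b ^ k * b - a * (c (k + 1) a * b ^ (k + 1)))
          rw [mul_pow]
          ring
      rw [hfun, ← hval]
      exact hcomb
    intro n
    have := key (n + 1)
    have h' : (c n ((q : ℂ) * a) - c n a) + a * c (n + 1) a
        - a * (q : ℂ) ^ (n + 1) * c (n + 1) a = 0 := this
    linear_combination -h'
  have hq0c : (q : ℂ) ≠ 0 := by exact_mod_cast hq0.ne'
  have hD : ∀ n : ℕ, ∀ a : ℂ, a ≠ 0 → ‖a‖ ≤ ρ →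
      (qDeriv (q : ℂ))^[n] g a = qPoch (q : ℂ) (q : ℂ) n * c n a := by
    intro n
    induction n with
    | zero =>
      intro a _ ha
      simp [qPoch, (hB a ha).symm]
    | succ n ih =>
      intro a ha0 ha
      rw [Function.iterate_succ_apply']
      have hqa0 : (q : ℂ) * a ≠ 0 := mul_ne_zero hq0c ha0
      have hqa : ‖(q : ℂ) * a‖ ≤ ρ := by
        rw [norm_mul, hqc]
        nlinarith [norm_nonneg a]
      show ((qDeriv (q : ℂ))^[n] g a - (qDeriv (q : ℂ))^[n] g ((q : ℂ) * a)) / a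
        = qPoch (q : ℂ) (q : ℂ) (n + 1) * c (n + 1) a
      rw [ih a ha0 ha, ih _ hqa0 hqa]
      have hpoch : qPoch (q : ℂ) (q : ℂ) (n + 1)
          = qPoch (q : ℂ) (q : ℂ) n * (1 - (q : ℂ) * (q : ℂ) ^ n) :=
        Finset.prod_range_succ _ _
      rw [div_eq_iff ha0, hpoch]
      linear_combination qPoch (q : ℂ) (q : ℂ) n * hrec a ha n
  have hpochne : ∀ n, qPoch (q : ℂ) (q : ℂ) n ≠ 0 := by
    intro n
    apply Finset.prod_ne_zero_iff.mpr
    intro j _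
    intro hcontra
    have h1 : ((q * q ^ j : ℝ) : ℂ) = 1 := by
      push_cast
      linear_combination -hcontra
    have h2 : (q * q ^ j : ℝ) = 1 := by exact_mod_cast h1
    have hj0 : (0 : ℝ) < q ^ j := pow_pos hq0 j
    have hj1 : q ^ j ≤ 1 := pow_le_one₀ hq0.le hq1.le
    nlinarith
  refine ⟨Metric.ball ((0 : ℂ), (0 : ℂ)) ρ, Metric.ball_mem_nhds _ hρ, ?_, ?_⟩
  · intro x hx
    apply hball
    exact Metric.ball_subset_ball (by linarith) hx
  · intro a b hab ha0
    have hd : max ‖a‖ ‖b‖ < ρ := by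
      have := hab
      rw [Metric.mem_ball, Prod.dist_eq] at this
      simpa [dist_zero_right] using this
    have ha : ‖a‖ < ρ := lt_of_le_of_lt (le_max_left _ _) hd
    have hb : ‖b‖ < ρ := lt_of_le_of_lt (le_max_right _ _) hd
    have hfun : (fun n : ℕ => b ^ n / qPoch (q : ℂ) (q : ℂ) n * ((qDeriv (q : ℂ))^[n] g a))
        = fun n => c n a * b ^ n := by
      funext n
      rw [hD n a ha0 ha.le]
      field_simp [hpochne n]
    rw [hfun]
    exact hA a b ha.le hb
end
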